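/- Let M and A be sets, let X be a nonempty finite set of functions from M to A, and let rk_X be the relational diversity rank function induced by X. Then for all finite x, y ⊆ M: rk_X(x ∪ y) = rk_X(x) if and only if for all s, s' ∈ X, if s and s' agree on every element of x then they agree on every element of y (i.e., the dependence relation induced by rk_X coincides with database-theoretic functional dependence). -/
import Mathlib


/-- The relational diversity rank induced by a team `X` of assignments `α → β`:
`rk_X(x) = log₂ |{s↾x : s ∈ X}|`. -/
noncomputable def relRank {α : Type*} {β : Type*} (X : Finset (α → β)) (x : Finset α) : ℝ :=
  Real.logb 2 (Set.ncard ((↑x : Set α).restrict '' (↑X : Set (α → β))))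

theorem relRank_dep_iff_functional_dependence {α : Type*} {β : Type*} [DecidableEq α]
    (X : Finset (α → β)) (hX : X.Nonempty) (x y : Finset α) :
    relRank X (x ∪ y) = relRank X x ↔
      ∀ s ∈ X, ∀ s' ∈ X, (∀ a ∈ x, s a = s' a) → ∀ a ∈ y, s a = s' a := by
  classical
  have hsub : (↑x : Set α) ⊆ (↑(x ∪ y) : Set α) := by
    intro a ha; simp at ha ⊢; exact Or.inl ha
  set r : ((↑(x ∪ y) : Set α) → β) → ((↑x : Set α) → β) :=
    fun f a => f ⟨a.1, hsub a.2⟩ with hr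
  set S : Set ((↑(x ∪ y) : Set α) → β) := (↑(x ∪ y) : Set α).restrict '' (↑X : Set (α → β))
    with hS
  have hSfin : S.Finite := (X.finite_toSet).image _
  have hSne : S.Nonempty := ⟨_, ⟨hX.choose, by simpa using hX.choose_spec, rfl⟩⟩
  have himg : (↑x : Set α).restrict '' (↑X : Set (α → β)) = r '' S := by
    rw [hS, Set.image_image]
    rfl
  have hcard : relRank X (x ∪ y) = relRank X x ↔ S.ncard = (r '' S).ncard := by
    unfold relRank
    rw [himg]
    constructor
    · intro h
      have h1 : (0:ℝ) < (S.ncard : ℝ) := by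
        exact_mod_cast (Set.ncard_pos hSfin).mpr hSne
      have h2 : (0:ℝ) < ((r '' S).ncard : ℝ) := by
        exact_mod_cast (Set.ncard_pos (hSfin.image _)).mpr (hSne.image _)
      have := Real.logb_injOn_pos (b := 2) (by norm_num) (Set.mem_Ioi.2 h1)
        (Set.mem_Ioi.2 h2) h
      exact_mod_cast this
    · intro h; rw [h]
  rw [hcard, eq_comm, Set.ncard_image_iff hSfin]
  constructor
  · intro hinj s hs s' hs' hagr a ha
    have h1 : (↑(x ∪ y) : Set α).restrict s ∈ S := ⟨s, by simpa using hs, rfl⟩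
    have h2 : (↑(x ∪ y) : Set α).restrict s' ∈ S := ⟨s', by simpa using hs', rfl⟩
    have heq : r ((↑(x ∪ y) : Set α).restrict s) = r ((↑(x ∪ y) : Set α).restrict s') := by
      funext b
      exact hagr b.1 (by simpa using b.2)
    have := hinj h1 h2 heq
    have := congrFun this ⟨a, by simp [ha]⟩
    exact this
  · intro hdep f hf g hg hfg
    obtain ⟨s, hs, rfl⟩ := hf
    obtain ⟨s', hs', rfl⟩ := hg
    funext b
    obtain ⟨a, ha⟩ := b
    rcases Finset.mem_union.mp (by simpa using ha) with h | h
    · exact congrFun hfg ⟨a, by simpa using h⟩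
    · exact hdep s (by simpa using hs) s' (by simpa using hs')
        (fun c hc => congrFun hfg ⟨c, by simpa using hc⟩) a h
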